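/- arXiv:1610.09721 — 2 statements merged into one kernel-verified Lean document; each statement's English description precedes it below -/
import Mathlib

section
/- Let k ≥ 2 and let X be a word with content {x_1,...,x_n} in which each variable x_i occurs at least k−1 times. Then the monoid L_{2k}^1 = ⟨a,b,1 | aa=a, bb=b, (ab)^k = 0⟩ satisfies the identity x_1 x_2 ··· x_n · X · x_n x_{n−1} ··· x_1 ≈ x_1 x_2 ··· x_n · reverse(X) · x_n x_{n−1} ··· x_1. -/
/-- The alternating word abab⋯ of length ℓ (a = 0, b = 1 in `Fin 3`). -/
def altWord (ℓ : ℕ) : FreeMonoid (Fin 3) :=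
  FreeMonoid.ofList ((List.range ℓ).map (fun i => if i % 2 = 0 then (0 : Fin 3) else 1))

/-- Defining relations of the Lee monoid L_ℓ^1: generators a = 0, b = 1, zero = 2,
relations aa = a, bb = b, abab⋯ (length ℓ) = 0, and 0 is absorbing. -/
def leeRel (ℓ : ℕ) : FreeMonoid (Fin 3) → FreeMonoid (Fin 3) → Prop := fun u v =>
  (u = .of 0 * .of 0 ∧ v = .of 0) ∨
  (u = .of 1 * .of 1 ∧ v = .of 1) ∨
  (u = altWord ℓ ∧ v = .of 2) ∨
  (u = .of 2 * .of 0 ∧ v = .of 2) ∨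
  (u = .of 0 * .of 2 ∧ v = .of 2) ∨
  (u = .of 2 * .of 1 ∧ v = .of 2) ∨
  (u = .of 1 * .of 2 ∧ v = .of 2) ∨
  (u = .of 2 * .of 2 ∧ v = .of 2)

/-- The Lee monoid L_ℓ^1 (with adjoined identity 1, the empty word).
For ℓ = 2 * k this is L_{2k}^1 = ⟨a,b,1 ∣ aa=a, bb=b, (ab)^k = 0⟩. -/
def Lee (ℓ : ℕ) : Type := (conGen (leeRel ℓ)).Quotient

instance (ℓ : ℕ) : Monoid (Lee ℓ) := Con.monoid _

/-- The word x₁x₂⋯xₙ. -/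
def ascFin (n : ℕ) : List (Fin n) := List.ofFn id

namespace LeeAux

open List

/-! ### Combinatorics of Bool words -/

/-- discrete metric on Bool -/
def d (x y : Bool) : ℕ := if x = y then 0 else 1

lemma d_comm (x y : Bool) : d x y = d y x := by cases x <;> cases y <;> rfl

lemma d_tri (x y z : Bool) : d x z ≤ d x y + d y z := by
  cases x <;> cases y <;> cases z <;> simp [d]

/-- number of adjacent differing pairs -/
def nd : List Bool → ℕ
  | [] => 0
  | [_] => 0
  | x :: y :: t => d x y + nd (y :: t)

@[simp] lemma nd_nil : nd [] = 0 := rfl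
@[simp] lemma nd_single (x : Bool) : nd [x] = 0 := rfl
lemma nd_cons_cons (x y : Bool) (t : List Bool) :
    nd (x :: y :: t) = d x y + nd (y :: t) := rfl

lemma nd_le_cons (x : Bool) (t : List Bool) : nd t ≤ nd (x :: t) := by
  cases t with
  | nil => simp [nd]
  | cons y t => rw [nd_cons_cons]; omega

lemma nd_cons (x : Bool) (t : List Bool) (h : t ≠ []) :
    nd (x :: t) = d x (t.head h) + nd t := by
  cases t with
  | nil => simp at h
  | cons y t => rfl

lemma nd_append : ∀ (u v : List Bool) (hu : u ≠ []) (hv : v ≠ []),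
    nd (u ++ v) = nd u + d (u.getLast hu) (v.head hv) + nd v
  | [x], v, _, hv => by
      simpa using nd_cons x v hv
  | x :: y :: u, v, hu, hv => by
      have ih := nd_append (y :: u) v (by simp) hv
      have h1 : (x :: y :: u) ++ v = x :: ((y :: u) ++ v) := rfl
      have h2 : (x :: y :: u).getLast hu = (y :: u).getLast (by simp) :=
        List.getLast_cons (by simp)
      rw [h1, (show (y :: u) ++ v = y :: (u ++ v) from rfl), nd_cons_cons,
        (show y :: (u ++ v) = (y :: u) ++ v from rfl), ih, h2, nd_cons_cons]
      omega

lemma nd_reverse : ∀ (u : List Bool), nd u.reverse = nd u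
  | [] => rfl
  | [x] => rfl
  | x :: y :: t => by
      have ih := nd_reverse (y :: t)
      have h1 : (x :: y :: t).reverse = (y :: t).reverse ++ [x] := by simp
      have hne : (y :: t).reverse ≠ [] := by simp
      rw [h1, nd_append _ _ hne (by simp), List.getLast_reverse, ih, nd_cons_cons]
      simp only [List.head_cons, nd_single, d_comm x y]
      omega

lemma nd_sublist : ∀ {u w : List Bool}, u <+ w →
    nd u ≤ nd w ∧ ∀ c, nd (c :: u) ≤ nd (c :: w) := by
  intro u w h
  induction h with
  | slnil => exact ⟨le_refl _, fun c => le_refl _⟩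
  | @cons l₁ l₂ a h ih =>
      constructor
      · exact le_trans ih.1 (nd_le_cons a l₂)
      · intro c
        refine le_trans (ih.2 c) ?_
        cases l₂ with
        | nil => rw [nd_single]; exact Nat.zero_le _
        | cons z t =>
            rw [nd_cons_cons, nd_cons_cons, nd_cons_cons]
            have := d_tri c a z
            omega
  | @cons_cons l₁ l₂ a h ih =>
      constructor
      · exact ih.2 a
      · intro c
        rw [nd_cons_cons, nd_cons_cons]
        exact Nat.add_le_add_left (ih.2 a) _

/-- alternating word starting with `c`, of length `m+1` -/
def altL : Bool → ℕ → List Bool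
  | c, 0 => [c]
  | c, n + 1 => c :: altL (!c) n

@[simp] lemma altL_ne_nil (c : Bool) (m : ℕ) : altL c m ≠ [] := by
  cases m <;> simp [altL]

@[simp] lemma head_altL (c : Bool) (m : ℕ) (h : altL c m ≠ []) :
    (altL c m).head h = c := by cases m <;> rfl

@[simp] lemma nd_altL (c : Bool) (m : ℕ) : nd (altL c m) = m := by
  induction m generalizing c with
  | zero => rfl
  | succ n ih =>
      rw [(show altL c (n+1) = c :: altL (!c) n from rfl),
        nd_cons _ _ (altL_ne_nil _ _), head_altL, ih]
      cases c <;> simp [d] <;> omega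

lemma altL_append : ∀ (p q : ℕ) (c : Bool),
    altL c (p + q + 1) = altL c p ++ altL (xor c (p % 2 == 0)) q := by
  intro p
  induction p with
  | zero =>
      intro q c
      simp only [Nat.zero_add, show ((0 : ℕ) % 2 == 0) = true from rfl, Bool.xor_true]
      rfl
  | succ p ih =>
      intro q c
      have h1 : p + 1 + q + 1 = (p + q + 1) + 1 := by omega
      rw [h1, (show altL c ((p + q + 1) + 1) = c :: altL (!c) (p + q + 1) from rfl),
        ih q (!c)]
      have h2 : xor (!c) (p % 2 == 0) = xor c ((p + 1) % 2 == 0) := by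
        rcases Nat.mod_two_eq_zero_or_one p with h | h <;>
          · have h3 : (p + 1) % 2 = 1 - p % 2 := by omega
            simp [h, h3]
      rw [h2]
      rfl

lemma altL_succ_succ (c : Bool) (m : ℕ) :
    altL c (m + 2) = c :: (!c) :: altL c m := by
  have h1 : altL c (m + 2) = c :: altL (!c) (m + 1) := rfl
  have h2 : altL (!c) (m + 1) = (!c) :: altL (!(!c)) m := rfl
  rw [h1, h2, Bool.not_not]

lemma altL_join : ∀ (j : ℕ) (c : Bool),
    altL c (2 * j + 1) = (List.replicate (j + 1) [c, !c]).flatten := by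
  intro j
  induction j with
  | zero => intro c; rfl
  | succ j ih =>
      intro c
      have h1 : 2 * (j + 1) + 1 = (2 * j + 1) + 2 := by omega
      rw [h1, altL_succ_succ, ih]
      rfl

lemma pair_sublist : ∀ (w : List Bool), 1 ≤ nd w → ∃ c, [c, !c] <+ w := by
  intro w
  induction w with
  | nil => intro h; simp at h
  | cons x t ih =>
      intro h
      cases t with
      | nil => simp at h
      | cons y t' =>
          by_cases hxy : x = y
          · subst hxy
            have h1 : 1 ≤ nd (x :: t') := by
              rw [nd_cons_cons] at h
              simpa [d] using h
            obtain ⟨c, hc⟩ := ih h1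
            exact ⟨c, hc.cons x⟩
          · refine ⟨x, ?_⟩
            have hy : y = !x := by cases x <;> cases y <;> simp_all
            subst hy
            exact ((List.nil_sublist t').cons₂ (!x)).cons₂ x

lemma flatten_count_sublist {α β : Type*} [DecidableEq α] (a : α) (f : α → List β) :
    ∀ L : List α, (List.replicate (L.count a) (f a)).flatten <+ (L.map f).flatten := by
  intro L
  induction L with
  | nil => simp
  | cons x t ih =>
      by_cases hx : x = a
      · subst hx
        rw [show (x :: t).count x = t.count x + 1 by simp [List.count_cons]]
        rw [show List.replicate (t.count x + 1) (f x) = f x :: List.replicate (t.count x) (f x)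
          from rfl]
        exact (List.Sublist.refl (f x)).append ih
      · rw [show (x :: t).count a = t.count a by simp [List.count_cons, Ne.symm hx, hx]]
        exact ih.trans (List.sublist_append_right _ _)

lemma flatten_replicate_mono {β : Type*} (u : List β) {m n : ℕ} (h : m ≤ n) :
    (List.replicate m u).flatten <+ (List.replicate n u).flatten := by
  rw [show n = m + (n - m) by omega, List.replicate_add, List.flatten_append]
  exact List.sublist_append_left _ _

lemma flatten_replicate_sublist {β : Type*} {u v : List β} (h : u <+ v) (m : ℕ) :
    (List.replicate m u).flatten <+ (List.replicate m v).flatten := by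
  induction m with
  | zero => simp
  | succ j ih => exact h.append ih

lemma len1_reverse {α : Type*} {l : List α} (h : l.length ≤ 1) : l.reverse = l := by
  cases l with
  | nil => rfl
  | cons x t => cases t with
    | nil => rfl
    | cons y t' => simp at h

/-! ### The Lee monoid -/

def mk (ℓ : ℕ) (u : FreeMonoid (Fin 3)) : Lee ℓ := (u : (conGen (leeRel ℓ)).Quotient)

lemma mk_mul (ℓ : ℕ) (u v : FreeMonoid (Fin 3)) : mk ℓ (u * v) = mk ℓ u * mk ℓ v := rfl

lemma mk_one (ℓ : ℕ) : mk ℓ 1 = 1 := rfl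

lemma mk_rel (ℓ : ℕ) {u v : FreeMonoid (Fin 3)} (h : leeRel ℓ u v) : mk ℓ u = mk ℓ v :=
  (Con.eq _).mpr (ConGen.Rel.of u v h)

def ι (c : Bool) : Fin 3 := if c then 1 else 0

def gg (ℓ : ℕ) (c : Bool) : Lee ℓ := mk ℓ (.of (ι c))

def zz (ℓ : ℕ) : Lee ℓ := mk ℓ (.of 2)

def ev (ℓ : ℕ) (w : List Bool) : Lee ℓ := (w.map (gg ℓ)).prod

@[simp] lemma ev_nil (ℓ : ℕ) : ev ℓ [] = 1 := rfl

lemma ev_cons (ℓ : ℕ) (c : Bool) (w : List Bool) :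
    ev ℓ (c :: w) = gg ℓ c * ev ℓ w := by simp [ev]

lemma ev_single (ℓ : ℕ) (c : Bool) : ev ℓ [c] = gg ℓ c := by simp [ev]

lemma ev_append (ℓ : ℕ) (u v : List Bool) : ev ℓ (u ++ v) = ev ℓ u * ev ℓ v := by
  simp [ev]

lemma gg_idem (ℓ : ℕ) (c : Bool) : gg ℓ c * gg ℓ c = gg ℓ c := by
  cases c
  · exact (mk_mul ℓ _ _).symm.trans (mk_rel ℓ (Or.inl ⟨rfl, rfl⟩))
  · exact (mk_mul ℓ _ _).symm.trans (mk_rel ℓ (Or.inr (Or.inl ⟨rfl, rfl⟩)))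

lemma zz_mul_of (ℓ : ℕ) (x : Fin 3) : zz ℓ * mk ℓ (.of x) = zz ℓ := by
  fin_cases x
  · exact (mk_mul ℓ _ _).symm.trans
      (mk_rel ℓ (Or.inr (Or.inr (Or.inr (Or.inl ⟨rfl, rfl⟩)))))
  · exact (mk_mul ℓ _ _).symm.trans
      (mk_rel ℓ (Or.inr (Or.inr (Or.inr (Or.inr (Or.inr (Or.inl ⟨rfl, rfl⟩)))))))
  · exact (mk_mul ℓ _ _).symm.trans
      (mk_rel ℓ (Or.inr (Or.inr (Or.inr (Or.inr (Or.inr (Or.inr (Or.inr ⟨rfl, rfl⟩))))))))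

lemma of_mul_zz (ℓ : ℕ) (x : Fin 3) : mk ℓ (.of x) * zz ℓ = zz ℓ := by
  fin_cases x
  · exact (mk_mul ℓ _ _).symm.trans
      (mk_rel ℓ (Or.inr (Or.inr (Or.inr (Or.inr (Or.inl ⟨rfl, rfl⟩))))))
  · exact (mk_mul ℓ _ _).symm.trans
      (mk_rel ℓ (Or.inr (Or.inr (Or.inr (Or.inr (Or.inr (Or.inr (Or.inl ⟨rfl, rfl⟩))))))))
  · exact (mk_mul ℓ _ _).symm.trans
      (mk_rel ℓ (Or.inr (Or.inr (Or.inr (Or.inr (Or.inr (Or.inr (Or.inr ⟨rfl, rfl⟩))))))))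

lemma mk_ofList_cons (ℓ : ℕ) (x : Fin 3) (t : List (Fin 3)) :
    mk ℓ (.ofList (x :: t)) = mk ℓ (.of x) * mk ℓ (.ofList t) := by
  rw [FreeMonoid.ofList_cons, mk_mul]

lemma zz_mul_list (ℓ : ℕ) : ∀ l : List (Fin 3), zz ℓ * mk ℓ (.ofList l) = zz ℓ := by
  intro l
  induction l with
  | nil => rw [show FreeMonoid.ofList ([] : List (Fin 3)) = 1 from rfl, mk_one, mul_one]
  | cons x t ih => rw [mk_ofList_cons, ← mul_assoc, zz_mul_of, ih]

lemma mk_eq_ofList_toList (ℓ : ℕ) (u : FreeMonoid (Fin 3)) :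
    mk ℓ u = mk ℓ (.ofList u.toList) := by
  rw [FreeMonoid.ofList_toList]

lemma zz_mul (ℓ : ℕ) (m : Lee ℓ) : zz ℓ * m = zz ℓ := by
  induction m using Con.induction_on with
  | H u =>
      show zz ℓ * mk ℓ u = zz ℓ
      rw [mk_eq_ofList_toList]
      exact zz_mul_list ℓ u.toList

lemma list_mul_zz (ℓ : ℕ) : ∀ l : List (Fin 3), mk ℓ (.ofList l) * zz ℓ = zz ℓ := by
  intro l
  induction l with
  | nil => rw [show FreeMonoid.ofList ([] : List (Fin 3)) = 1 from rfl, mk_one, one_mul]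
  | cons x t ih => rw [mk_ofList_cons, mul_assoc, ih, of_mul_zz]

lemma mul_zz (ℓ : ℕ) (m : Lee ℓ) : m * zz ℓ = zz ℓ := by
  induction m using Con.induction_on with
  | H u =>
      show mk ℓ u * zz ℓ = zz ℓ
      rw [mk_eq_ofList_toList]
      exact list_mul_zz ℓ u.toList

lemma ev_eq_mk (ℓ : ℕ) : ∀ w : List Bool, ev ℓ w = mk ℓ (.ofList (w.map ι)) := by
  intro w
  induction w with
  | nil => rfl
  | cons c t ih => rw [ev_cons, ih, List.map_cons, mk_ofList_cons]; rfl

lemma not_mod2 (p : ℕ) : (!decide (p % 2 = 1)) = decide ((p + 1) % 2 = 1) := by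
  rcases Nat.mod_two_eq_zero_or_one p with h | h <;>
    · have h2 : (p + 1) % 2 = 1 - p % 2 := by omega
      simp [h, h2]

lemma altL_map_ι : ∀ (m s : ℕ),
    (altL (decide (s % 2 = 1)) m).map ι =
      (List.range' s (m + 1)).map (fun i => if i % 2 = 0 then (0 : Fin 3) else 1) := by
  intro m
  induction m with
  | zero =>
      intro s
      rcases Nat.mod_two_eq_zero_or_one s with h | h <;>
        simp [altL, ι, h, List.range', Nat.mod_two_ne_zero]
  | succ m ih =>
      intro s
      rw [List.range'_succ,
        (show altL (decide (s % 2 = 1)) (m + 1)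
          = decide (s % 2 = 1) :: altL (!decide (s % 2 = 1)) m from rfl),
        not_mod2, List.map_cons, ih (s + 1), List.map_cons]
      rcases Nat.mod_two_eq_zero_or_one s with h | h <;>
        simp [ι, h, Nat.mod_two_ne_zero]

lemma ev_altL_core (ℓ : ℕ) (hℓ : 1 ≤ ℓ) : ev ℓ (altL false (ℓ - 1)) = zz ℓ := by
  rw [ev_eq_mk]
  have h0 : (false : Bool) = decide ((0 : ℕ) % 2 = 1) := by simp
  rw [h0, altL_map_ι (ℓ - 1) 0, show ℓ - 1 + 1 = ℓ by omega, ← List.range_eq_range']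
  exact mk_rel ℓ (Or.inr (Or.inr (Or.inl ⟨rfl, rfl⟩)))

lemma ev_altL_ff (ℓ : ℕ) (hℓ : 1 ≤ ℓ) (m : ℕ) (hm : ℓ - 1 ≤ m) :
    ev ℓ (altL false m) = zz ℓ := by
  rcases eq_or_lt_of_le hm with h | h
  · rw [← h]; exact ev_altL_core ℓ hℓ
  · have h1 : m = (ℓ - 1) + (m - ℓ) + 1 := by omega
    rw [h1, altL_append, ev_append, ev_altL_core ℓ hℓ, zz_mul]

lemma ev_altL_zz (ℓ : ℕ) (hℓ : 1 ≤ ℓ) (c : Bool) (m : ℕ) (hm : ℓ ≤ m) :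
    ev ℓ (altL c m) = zz ℓ := by
  cases c
  · exact ev_altL_ff ℓ hℓ m (by omega)
  · obtain ⟨m', rfl⟩ : ∃ m', m = m' + 1 := ⟨m - 1, by omega⟩
    rw [show altL true (m' + 1) = true :: altL false m' from rfl, ev_cons,
      ev_altL_ff ℓ hℓ m' (by omega), mul_zz]

lemma ev_collapse (ℓ : ℕ) : ∀ (w : List Bool) (h : w ≠ []),
    ev ℓ w = ev ℓ (altL (w.head h) (nd w)) := by
  intro w
  induction w with
  | nil => intro h; simp at h
  | cons x t ih =>
      intro h
      cases t with
      | nil => rfl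
      | cons y t' =>
          by_cases hxy : x = y
          · subst hxy
            have h1 : ev ℓ (x :: x :: t') = ev ℓ (x :: t') := by
              rw [ev_cons, ev_cons, ← mul_assoc, gg_idem]
            have h2 : nd (x :: x :: t') = nd (x :: t') := by
              rw [nd_cons_cons]; simp [d]
            rw [h1, ih (by simp), h2]
            simp only [List.head_cons]
          · have hy : y = !x := by cases x <;> cases y <;> simp_all
            have h2 : nd (x :: y :: t') = nd (y :: t') + 1 := by
              rw [nd_cons_cons]
              have hd : d x y = 1 := by simp [d, hxy]
              omega
            rw [List.head_cons, h2,
              (show altL x (nd (y :: t') + 1) = x :: altL (!x) (nd (y :: t')) from rfl)]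
            have lhs : ev ℓ (x :: y :: t') = gg ℓ x * ev ℓ (y :: t') := ev_cons ℓ x _
            rw [lhs, ih (by simp), List.head_cons, hy, ev_cons]

def F (ℓ : ℕ) : Fin 3 → List Bool := fun x =>
  if x = 0 then [false] else if x = 1 then [true] else altL false (ℓ - 1)

lemma mk_of_eq_ev (ℓ : ℕ) (hℓ : 1 ≤ ℓ) (x : Fin 3) : mk ℓ (.of x) = ev ℓ (F ℓ x) := by
  fin_cases x
  · show mk ℓ (.of 0) = ev ℓ (F ℓ 0)
    rw [(show F ℓ 0 = [false] by simp [F]), ev_single]; rfl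
  · show mk ℓ (.of 1) = ev ℓ (F ℓ 1)
    rw [(show F ℓ 1 = [true] by simp [F]), ev_single]; rfl
  · show mk ℓ (.of 2) = ev ℓ (F ℓ 2)
    rw [(show F ℓ 2 = altL false (ℓ - 1) by simp [F]), ev_altL_core ℓ hℓ]; rfl

lemma mk_list_rep (ℓ : ℕ) (hℓ : 1 ≤ ℓ) : ∀ l : List (Fin 3),
    mk ℓ (.ofList l) = ev ℓ (l.map (F ℓ)).flatten := by
  intro l
  induction l with
  | nil => rfl
  | cons x t ih =>
      rw [mk_ofList_cons, List.map_cons, List.flatten_cons, ev_append, ih,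
        mk_of_eq_ev ℓ hℓ x]

lemma exists_rep (ℓ : ℕ) (hℓ : 1 ≤ ℓ) (m : Lee ℓ) : ∃ w : List Bool, m = ev ℓ w := by
  induction m using Con.induction_on with
  | H u =>
      refine ⟨(u.toList.map (F ℓ)).flatten, ?_⟩
      show mk ℓ u = _
      rw [mk_eq_ofList_toList]
      exact mk_list_rep ℓ hℓ u.toList

lemma prod_eq_ev (ℓ : ℕ) {n : ℕ} (θ : Fin n → Lee ℓ) (rep : Fin n → List Bool)
    (hrep : ∀ i, θ i = ev ℓ (rep i)) :
    ∀ L : List (Fin n), (L.map θ).prod = ev ℓ (L.map rep).flatten := by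
  intro L
  induction L with
  | nil => rfl
  | cons x t ih =>
      rw [List.map_cons, List.prod_cons, List.map_cons, List.flatten_cons, ev_append,
        ih, hrep x]

lemma flatten_map_reverse {n : ℕ} (rep : Fin n → List Bool)
    (h : ∀ i, (rep i).length ≤ 1) :
    ∀ L : List (Fin n), (L.reverse.map rep).flatten = ((L.map rep).flatten).reverse := by
  intro L
  induction L with
  | nil => rfl
  | cons x t ih =>
      rw [List.reverse_cons, List.map_append, List.flatten_append, ih]
      simp [List.reverse_append, len1_reverse (h x)]

end LeeAux

open LeeAux List in
/-- Let k ≥ 2 and X a word with content {x₁,…,xₙ} in which every variable occurs at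
least k − 1 times.  Then L_{2k}^1 satisfies
x₁x₂⋯xₙ · X · xₙ⋯x₂x₁ ≈ x₁x₂⋯xₙ · reverse(X) · xₙ⋯x₂x₁. -/
theorem stmt3 (k : ℕ) (hk : 2 ≤ k) (n : ℕ) (X : List (Fin n))
    (hocc : ∀ i : Fin n, k - 1 ≤ X.count i)
    (θ : Fin n → Lee (2 * k)) :
    (((ascFin n ++ X ++ (ascFin n).reverse).map θ).prod
      = ((ascFin n ++ X.reverse ++ (ascFin n).reverse).map θ).prod) := by
  classical
  have hℓ : 1 ≤ 2 * k := by omega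
  choose w hw using fun i => exists_rep (2 * k) hℓ (θ i)
  have hasc : ∀ i : Fin n, (ascFin n).count i = 1 := by
    intro i
    refine List.count_eq_one_of_mem ?_ ?_
    · exact List.nodup_ofFn.mpr (fun a b h => h)
    · exact (List.mem_ofFn (f := id) (a := i)).mpr ⟨i, rfl⟩
  by_cases hbig : ∃ i, 1 ≤ nd (w i)
  · -- some variable has an alternation: both sides are zero
    obtain ⟨i0, hi0⟩ := hbig
    obtain ⟨c, hc⟩ := pair_sublist (w i0) hi0
    have key : ∀ L : List (Fin n), k + 1 ≤ L.count i0 →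
        ev (2 * k) (L.map w).flatten = zz (2 * k) := by
      intro L hL
      have e1 : altL c (2 * k + 1) = (List.replicate (k + 1) [c, !c]).flatten :=
        altL_join k c
      have s2 : (List.replicate (k + 1) [c, !c]).flatten
          <+ (List.replicate (k + 1) (w i0)).flatten :=
        flatten_replicate_sublist hc (k + 1)
      have s3 : (List.replicate (k + 1) (w i0)).flatten
          <+ (List.replicate (L.count i0) (w i0)).flatten :=
        flatten_replicate_mono (w i0) hL
      have s4 : (List.replicate (L.count i0) (w i0)).flatten <+ (L.map w).flatten :=
        flatten_count_sublist i0 w L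
      have sub1 : altL c (2 * k + 1) <+ (L.map w).flatten := by
        rw [e1]; exact s2.trans (s3.trans s4)
      have hne : (L.map w).flatten ≠ [] := by
        intro h
        rw [h] at sub1
        exact altL_ne_nil c (2 * k + 1) (List.sublist_nil.mp sub1)
      have hnd : 2 * k ≤ nd (L.map w).flatten := by
        have h5 := (nd_sublist sub1).1
        rw [nd_altL] at h5
        omega
      rw [ev_collapse _ _ hne, ev_altL_zz (2 * k) hℓ _ _ hnd]
    rw [prod_eq_ev (2 * k) θ w hw, prod_eq_ev (2 * k) θ w hw]
    have c1 : k + 1 ≤ (ascFin n ++ X ++ (ascFin n).reverse).count i0 := by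
      rw [List.count_append, List.count_append, List.count_reverse, hasc i0]
      have := hocc i0
      omega
    have c2 : k + 1 ≤ (ascFin n ++ X.reverse ++ (ascFin n).reverse).count i0 := by
      rw [List.count_append, List.count_append, List.count_reverse, List.count_reverse,
        hasc i0]
      have := hocc i0
      omega
    rw [key _ c1, key _ c2]
  · -- all representatives are single letters (or empty)
    push_neg at hbig
    have hbig' : ∀ i, nd (w i) = 0 := fun i => by have := hbig i; omega
    set rep : Fin n → List Bool := fun i =>
      if h : w i = [] then [] else [(w i).head h] with hrepdef
    have hrep : ∀ i, θ i = ev (2 * k) (rep i) := by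
      intro i
      rw [hw i, hrepdef]
      by_cases h : w i = []
      · simp [h]
      · simp only [h, dite_false]
        rw [ev_collapse (2 * k) (w i) h, hbig' i]
        rfl
    have hlen : ∀ i, (rep i).length ≤ 1 := by
      intro i
      rw [hrepdef]
      by_cases h : w i = [] <;> simp [h]
    rw [prod_eq_ev (2 * k) θ rep hrep, prod_eq_ev (2 * k) θ rep hrep]
    set S : List Bool := ((ascFin n).map rep).flatten with hSdef
    set T : List Bool := (X.map rep).flatten with hTdef
    have hrev : ((ascFin n).reverse.map rep).flatten = S.reverse :=
      flatten_map_reverse rep hlen (ascFin n)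
    have hrevT : (X.reverse.map rep).flatten = T.reverse :=
      flatten_map_reverse rep hlen X
    have e1 : ((ascFin n ++ X ++ (ascFin n).reverse).map rep).flatten
        = (S ++ T) ++ S.reverse := by
      rw [List.map_append, List.map_append, List.flatten_append, List.flatten_append, hrev]
    have e2 : ((ascFin n ++ X.reverse ++ (ascFin n).reverse).map rep).flatten
        = (S ++ T.reverse) ++ S.reverse := by
      rw [List.map_append, List.map_append, List.flatten_append, List.flatten_append,
        hrev, hrevT]
    rw [e1, e2]
    by_cases hS : S = []
    · have hall : ∀ i, rep i = [] := by
        intro i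
        refine List.flatten_eq_nil_iff.mp hS (rep i) ?_
        exact List.mem_map_of_mem (f := rep) ((List.mem_ofFn (f := id) (a := i)).mpr ⟨i, rfl⟩)
      have hT : T = [] := by
        rw [hTdef]
        refine List.flatten_eq_nil_iff.mpr ?_
        intro l hl
        obtain ⟨x, _, rfl⟩ := List.mem_map.mp hl
        exact hall x
      rw [hS, hT]
      rfl
    · by_cases hT : T = []
      · rw [hT]
        rfl
      · have hST1 : S ++ T ≠ [] := by simp [hS]
        have hST2 : S ++ T.reverse ≠ [] := by simp [hS]
        have h1 : (S ++ T) ++ S.reverse ≠ [] := by simp [hS]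
        have h2 : (S ++ T.reverse) ++ S.reverse ≠ [] := by simp [hS]
        have hTrev : T.reverse ≠ [] := by simp [hT]
        have hSrev : S.reverse ≠ [] := by simp [hS]
        rw [ev_collapse (2 * k) _ h1, ev_collapse (2 * k) _ h2]
        have hhead : ((S ++ T) ++ S.reverse).head h1
            = ((S ++ T.reverse) ++ S.reverse).head h2 := by
          rw [List.head_append_of_ne_nil hST1, List.head_append_of_ne_nil hST2,
            List.head_append_of_ne_nil hS, List.head_append_of_ne_nil hS]
        have hnd : nd ((S ++ T) ++ S.reverse) = nd ((S ++ T.reverse) ++ S.reverse) := by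
          rw [nd_append _ _ hST1 hSrev, nd_append _ _ hST2 hSrev,
            nd_append _ _ hS hT, nd_append _ _ hS hTrev,
            List.getLast_append_of_ne_nil (h₂ := hT), List.getLast_append_of_ne_nil (h₂ := hTrev),
            List.head_reverse, List.head_reverse, List.getLast_reverse,
            nd_reverse, nd_reverse]
          have hc1 : d (T.getLast hT) (S.getLast hS) = d (S.getLast hS) (T.getLast hT) :=
            d_comm _ _
          have hc2 : d (T.head hT) (S.getLast hS) = d (S.getLast hS) (T.head hT) :=
            d_comm _ _
          rw [hc1, hc2]
          ring
        rw [hhead, hnd]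
end

section
/- Let M be a monoid satisfying Property (C_3). If M satisfies an identity u ≈ v, then: (i) u and v have the same set of linear variables, the same set of non-linear variables, and the linear variables occur in the same order in u and v; (ii) writing u = a_0 t_1 a_1 t_2 ··· t_m a_m where t_1,...,t_m are the linear variables of u and the a_q are the blocks (possibly empty words in the non-linear variables), then v = b_0 t_1 b_1 t_2 ··· t_m b_m with con(a_q) = con(b_q) for each 0 ≤ q ≤ m. -/
/-- Two words have the same type: equal up to changing the positive exponents of
their maximal single-letter blocks. -/
def SameType {α : Type*} (u v : List α) : Prop :=
  ∃ L : List (α × ℕ × ℕ),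
    (∀ p ∈ L, 0 < p.2.1 ∧ 0 < p.2.2) ∧
    List.Chain' (fun p q => p.1 ≠ q.1) L ∧
    u = L.flatMap (fun p => List.replicate p.2.1 p.1) ∧
    v = L.flatMap (fun p => List.replicate p.2.2 p.1)

/-- The height of a word: the number of islands (maximal one-letter power factors). -/
def height {α : Type*} [DecidableEq α] (u : List α) : ℕ :=
  (u.destutter (· ≠ ·)).length

/-- A monoid M satisfies the identity u ≈ v (words in countably many variables). -/
def SatM (M : Type*) [Monoid M] (u v : List ℕ) : Prop :=
  ∀ θ : ℕ → M, (u.map θ).prod = (v.map θ).prod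

/-- Property (C_ℓ): every word over a two-letter alphabet {x,y} of height at most ℓ
can form an identity of M only with a word of the same type. -/
def PropC (M : Type*) [Monoid M] (ℓ : ℕ) : Prop :=
  ∀ x y : ℕ, x ≠ y → ∀ u v : List ℕ, u ≠ [] → (∀ z ∈ u, z = x ∨ z = y) →
    height u ≤ ℓ → SatM M u v → SameType u v

/-- `assemble [a₀,a₁,…,a_m] [t₁,…,t_m] = a₀ t₁ a₁ t₂ ⋯ t_m a_m`:  the word with
blocks a_q separated by the linear letters t_q. -/
def assemble : List (List ℕ) → List ℕ → List ℕ
  | [], _ => []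
  | a :: _, [] => a
  | a :: A, t :: T => a ++ t :: assemble A T

/-- u(x,y): the word obtained from u by deleting all occurrences of variables other
than x and y. -/
def proj (u : List ℕ) (x y : ℕ) : List ℕ := u.filter (fun z => z == x || z == y)

/-! ### Auxiliary lemmas -/

section Aux
open List

lemma satm_symm {M : Type*} [Monoid M] {u v : List ℕ} (h : SatM M u v) : SatM M v u :=
  fun θ => (h θ).symm

lemma satm_flatMap {M : Type*} [Monoid M] {u v : List ℕ} (h : SatM M u v) (σ : ℕ → List ℕ) :
    SatM M (u.flatMap σ) (v.flatMap σ) := by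
  intro θ
  have key : ∀ w : List ℕ,
      ((w.flatMap σ).map θ).prod = (w.map (fun z => ((σ z).map θ).prod)).prod := by
    intro w
    induction w with
    | nil => simp
    | cons a w ih => simp [List.flatMap_cons, ih]
  rw [key, key]; exact h _

lemma mapfst_sublist_flatMap (L : List (ℕ × ℕ)) (he : ∀ p ∈ L, 0 < p.2) :
    L.map Prod.fst <+ L.flatMap (fun q => List.replicate q.2 q.1) := by
  induction L with
  | nil => simp
  | cons a L ih =>
    simp only [List.map_cons, List.flatMap_cons]
    have h1 : [a.1] <+ List.replicate a.2 a.1 :=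
      List.singleton_sublist.mpr (List.mem_replicate.mpr ⟨by have := he a (by simp); omega, rfl⟩)
    exact List.Sublist.append h1 (ih (fun p hp => he p (by simp [hp])))

lemma pat0 : ∀ (L : List (ℕ × ℕ)), (∀ q ∈ L, 0 < q.2) → List.Chain' (fun a b => a.1 ≠ b.1) L →
    ∀ (p : List ℕ), p.Chain' (· ≠ ·) →
    (p <+ L.flatMap (fun q => List.replicate q.2 q.1) ↔ p <+ L.map Prod.fst) := by
  intro L he hch p hp
  constructor
  · clear hch
    induction L generalizing p with
    | nil => simp
    | cons a L ih =>
      intro h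
      simp only [List.flatMap_cons] at h
      rcases List.sublist_append_iff.mp h with ⟨p1, p2, rfl, h1, h2⟩
      have hall : ∀ z ∈ p1, z = a.1 := fun z hz => List.eq_of_mem_replicate (h1.subset hz)
      have hch2 : p2.Chain' (· ≠ ·) := (List.isChain_append.mp hp).2.1
      have hp2 : p2 <+ L.map Prod.fst := ih (fun q hq => he q (by simp [hq])) p2 hch2 h2
      match p1, hall with
      | [], _ => exact hp2.trans (List.sublist_cons_self _ _)
      | [z], hall =>
        have : z = a.1 := hall z (by simp)
        subst this
        exact hp2.cons₂ _
      | z1 :: z2 :: p1, hall =>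
        exfalso
        have h1 : z1 = a.1 := hall _ (by simp)
        have h2 : z2 = a.1 := hall _ (by simp)
        have := (List.isChain_append.mp hp).1
        rw [h1, h2] at this
        exact (List.isChain_cons_cons.mp this).1 rfl
  · intro h
    exact h.trans (mapfst_sublist_flatMap L he)

lemma sameType_pat {u v : List ℕ} (h : SameType u v) (p : List ℕ) (hp : p.Chain' (· ≠ ·)) :
    p <+ u ↔ p <+ v := by
  obtain ⟨L, hpos, hch, hu, hv⟩ := h
  subst hu hv
  have e1 : L.flatMap (fun q => List.replicate q.2.1 q.1)
      = (L.map (fun q => (q.1, q.2.1))).flatMap (fun q => List.replicate q.2 q.1) := by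
    rw [List.flatMap_map]
  have e2 : L.flatMap (fun q => List.replicate q.2.2 q.1)
      = (L.map (fun q => (q.1, q.2.2))).flatMap (fun q => List.replicate q.2 q.1) := by
    rw [List.flatMap_map]
  have m1 : (L.map (fun q => (q.1, q.2.1))).map Prod.fst = L.map Prod.fst := by
    rw [List.map_map]; rfl
  have m2 : (L.map (fun q => (q.1, q.2.2))).map Prod.fst = L.map Prod.fst := by
    rw [List.map_map]; rfl
  have c1 : List.Chain' (fun a b => a.1 ≠ b.1) (L.map (fun q => (q.1, q.2.1))) := by
    rw [List.Chain', List.isChain_map]; exact hch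
  have c2 : List.Chain' (fun a b => a.1 ≠ b.1) (L.map (fun q => (q.1, q.2.2))) := by
    rw [List.Chain', List.isChain_map]; exact hch
  have hp1 : ∀ q ∈ L.map (fun q => (q.1, q.2.1)), 0 < q.2 := by
    intro q hq
    simp only [List.mem_map] at hq
    obtain ⟨r, hr, rfl⟩ := hq
    exact (hpos r hr).1
  have hp2 : ∀ q ∈ L.map (fun q => (q.1, q.2.2)), 0 < q.2 := by
    intro q hq
    simp only [List.mem_map] at hq
    obtain ⟨r, hr, rfl⟩ := hq
    exact (hpos r hr).2
  rw [e1, e2, pat0 _ hp1 c1 p hp, pat0 _ hp2 c2 p hp, m1, m2]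

lemma sameType_mem {u v : List ℕ} (h : SameType u v) (x : ℕ) : x ∈ u ↔ x ∈ v := by
  have := sameType_pat h [x] (by simp [List.Chain'])
  simpa [List.singleton_sublist] using this

lemma d1 (x : ℕ) : ∀ n, List.destutter' (· ≠ ·) x (List.replicate n x) = [x]
  | 0 => by simp
  | n+1 => by
    rw [List.replicate_succ, List.destutter'_cons, if_neg (by simp), d1 x n]

lemma d2 (x : ℕ) (l : List ℕ) : ∀ n,
    List.destutter' (· ≠ ·) x (List.replicate n x ++ l) = List.destutter' (· ≠ ·) x l
  | 0 => by simp
  | n+1 => by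
    rw [List.replicate_succ, List.cons_append, List.destutter'_cons, if_neg (by simp), d2 x l n]

lemma d3 {x t : ℕ} (h : t ≠ x) : ∀ b,
    List.destutter' (· ≠ ·) t (List.replicate b x) = if b = 0 then [t] else [t, x]
  | 0 => by simp
  | b+1 => by
    rw [List.replicate_succ, List.destutter'_cons, if_pos h, d1 x b]
    simp

lemma height_H1 {x t : ℕ} (h : x ≠ t) (a b : ℕ) :
    height (List.replicate a x ++ t :: List.replicate b x) ≤ 3 := by
  unfold height
  cases a with
  | zero =>
    simp only [List.replicate, List.nil_append, List.destutter_cons']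
    rw [d3 (Ne.symm h)]
    split <;> simp
  | succ a =>
    rw [List.replicate_succ, List.cons_append, List.destutter_cons', d2,
      List.destutter'_cons, if_pos h, d3 (Ne.symm h)]
    split <;> simp

lemma height_H2 {x t : ℕ} (h : x ≠ t) (a g : ℕ) :
    height (List.replicate a x ++ t :: t :: List.replicate g x) ≤ 3 := by
  unfold height
  cases a with
  | zero =>
    simp only [List.replicate, List.nil_append, List.destutter_cons']
    rw [List.destutter'_cons, if_neg (by simp), d3 (Ne.symm h)]
    split <;> simp
  | succ a =>
    rw [List.replicate_succ, List.cons_append, List.destutter_cons', d2,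
      List.destutter'_cons, if_pos h, List.destutter'_cons, if_neg (by simp), d3 (Ne.symm h)]
    split <;> simp

lemma height_rep (x : ℕ) (a : ℕ) : height (List.replicate a x) ≤ 3 := by
  unfold height
  cases a with
  | zero => simp
  | succ a => rw [List.replicate_succ, List.destutter_cons', d1]; simp

lemma height_pair {x y : ℕ} (h : x ≠ y) : height [x, y] ≤ 3 := by
  unfold height
  rw [List.destutter_pair, if_pos h]
  simp

lemma mem_split_first {a : ℕ} : ∀ {l : List ℕ}, a ∈ l → ∃ s t, l = s ++ a :: t ∧ a ∉ s := by
  intro l h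
  induction l with
  | nil => cases h
  | cons b l ih =>
    by_cases hb : b = a
    · subst hb; exact ⟨[], l, rfl, by simp⟩
    · rcases List.mem_cons.mp h with h1 | h1
      · exact absurd h1.symm hb
      · rcases ih h1 with ⟨s, t, rfl, hs⟩
        exact ⟨b :: s, t, rfl, by simp [hs, Ne.symm hb]⟩

lemma count_one_split {l : List ℕ} {a : ℕ} (h : l.count a = 1) :
    ∃ s t, l = s ++ a :: t ∧ a ∉ s ∧ a ∉ t := by
  have hm : a ∈ l := List.count_pos_iff.mp (by omega)
  rcases mem_split_first hm with ⟨s, t, rfl, hs⟩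
  refine ⟨s, t, rfl, hs, ?_⟩
  have hcs : s.count a = 0 := List.count_eq_zero.mpr hs
  rw [List.count_append, List.count_cons_self, hcs] at h
  exact List.count_eq_zero.mp (by omega)

lemma count_two_split {l : List ℕ} {a : ℕ} (h : 2 ≤ l.count a) :
    ∃ s t w, l = s ++ a :: t ++ a :: w := by
  have hm : a ∈ l := List.count_pos_iff.mp (by omega)
  rcases mem_split_first hm with ⟨s, t, rfl, hs⟩
  have hcs : s.count a = 0 := List.count_eq_zero.mpr hs
  rw [List.count_append, List.count_cons_self, hcs] at h
  have : a ∈ t := List.count_pos_iff.mp (by omega)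
  rcases mem_split_first this with ⟨t1, t2, rfl, _⟩
  exact ⟨s, t1, t2, by simp⟩

lemma flatMap_rep {σ : ℕ → List ℕ} {x : ℕ} (hx : σ x = [x]) :
    ∀ w : List ℕ, (∀ z ∈ w, z ≠ x → σ z = []) → w.flatMap σ = List.replicate (w.count x) x := by
  intro w
  induction w with
  | nil => simp
  | cons a w ih =>
    intro hw
    rw [List.flatMap_cons, ih (fun z hz => hw z (by simp [hz]))]
    by_cases h : a = x
    · subst h
      rw [hx, List.count_cons_self, List.replicate_succ]
      rfl
    · rw [hw a (by simp) h, List.count_cons_of_ne h]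
      simp

lemma flatMap_nil {σ : ℕ → List ℕ} : ∀ w : List ℕ, (∀ z ∈ w, σ z = []) → w.flatMap σ = [] := by
  intro w h
  simp only [List.flatMap_eq_nil_iff]
  exact h

lemma le_foldr_max : ∀ (l : List ℕ), ∀ z ∈ l, z ≤ l.foldr max 0 := by
  intro l
  induction l with
  | nil => simp
  | cons a l ih =>
    intro z hz
    rcases List.mem_cons.mp hz with rfl | hz
    · exact le_max_left _ _
    · exact le_trans (ih z hz) (le_max_right _ _)

/-- Membership is preserved. -/
lemma mem_preserved {M : Type*} [Monoid M] (hC : PropC M 3) {u v : List ℕ} (hsat : SatM M u v)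
    (x : ℕ) (h : x ∈ u) : x ∈ v := by
  classical
  set σ : ℕ → List ℕ := fun z => if z = x then [x] else [] with hσ
  have hσx : σ x = [x] := by simp [hσ]
  have hu' : u.flatMap σ = List.replicate (u.count x) x :=
    flatMap_rep hσx u (fun z _ hz => by simp [hσ, hz])
  have hv' : v.flatMap σ = List.replicate (v.count x) x :=
    flatMap_rep hσx v (fun z _ hz => by simp [hσ, hz])
  have hsat' : SatM M (u.flatMap σ) (v.flatMap σ) := satm_flatMap hsat σ
  rw [hu', hv'] at hsat'
  have hcu : 0 < u.count x := List.count_pos_iff.mpr h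
  have hST : SameType (List.replicate (u.count x) x) (List.replicate (v.count x) x) := by
    apply hC x (x+1) (by omega)
    · intro hnil
      rw [List.replicate_eq_nil_iff] at hnil
      omega
    · intro z hz
      exact Or.inl (List.eq_of_mem_replicate hz)
    · exact height_rep x _
    · exact hsat'
  have hx : x ∈ List.replicate (v.count x) x := by
    rw [← sameType_mem hST x]
    exact List.mem_replicate.mpr ⟨by omega, rfl⟩
  rw [List.mem_replicate] at hx
  exact List.count_pos_iff.mp (by omega)

/-- Linearity is preserved. -/
lemma count_one_of {M : Type*} [Monoid M] (hC : PropC M 3) {u v : List ℕ} (hsat : SatM M u v)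
    {x : ℕ} (h : u.count x = 1) : v.count x = 1 := by
  classical
  have hmem : x ∈ v := mem_preserved hC hsat x (List.count_pos_iff.mp (by omega))
  have hpos : 0 < v.count x := List.count_pos_iff.mpr hmem
  by_contra hne
  have h2 : 2 ≤ v.count x := by omega
  -- choose a fresh variable y
  set y : ℕ := (x :: (u ++ v)).foldr max 0 + 1 with hy
  have hyfresh : ∀ z ∈ x :: (u ++ v), z ≠ y := by
    intro z hz
    have := le_foldr_max _ z hz
    omega
  have hxy : x ≠ y := hyfresh x (by simp)
  have hyu : y ∉ u := fun hm => hyfresh y (by simp [hm]) rfl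
  have hyv : y ∉ v := fun hm => hyfresh y (by simp [hm]) rfl
  set σ : ℕ → List ℕ := fun z => if z = x then [x, y] else [] with hσ
  obtain ⟨s, t, huq, hs, ht⟩ := count_one_split h
  have hu' : u.flatMap σ = [x, y] := by
    rw [huq, List.flatMap_append, List.flatMap_cons]
    rw [flatMap_nil s (fun z hz => by have : z ≠ x := fun he => hs (he ▸ hz); simp [hσ, this]),
      flatMap_nil t (fun z hz => by have : z ≠ x := fun he => ht (he ▸ hz); simp [hσ, this])]
    simp [hσ]
  obtain ⟨s', t', w', hv⟩ := count_two_split h2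
  have e : v.flatMap σ
      = s'.flatMap σ ++ ([x, y] ++ (t'.flatMap σ ++ ([x, y] ++ w'.flatMap σ))) := by
    rw [hv]
    simp [List.flatMap_append, List.flatMap_cons, hσ]
  have hyx : [y, x] <+ v.flatMap σ := by
    rw [e]
    have h1 : [y] <+ [x, y] := by simp
    have h2 : [x] <+ [x, y] := by simp
    have h3 : [y, x] <+ [x, y] ++ (t'.flatMap σ ++ ([x, y] ++ w'.flatMap σ)) := by
      apply List.Sublist.append h1
      exact (h2.trans (List.sublist_append_left _ _)).trans (List.sublist_append_right _ _)
    exact h3.trans (List.sublist_append_right _ _)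
  have hsat' : SatM M (u.flatMap σ) (v.flatMap σ) := satm_flatMap hsat σ
  rw [hu'] at hsat'
  have hST : SameType [x, y] (v.flatMap σ) := by
    apply hC x y hxy
    · simp
    · intro z hz
      rcases List.mem_cons.mp hz with rfl | hz
      · exact Or.inl rfl
      · simp at hz
        exact Or.inr hz
    · exact height_pair hxy
    · exact hsat'
  have hfin : [y, x] <+ [x, y] := (sameType_pat hST [y, x] (by simp [List.Chain', Ne.symm hxy])).mpr hyx
  have := hfin.eq_of_length rfl
  exact hxy (List.cons_eq_cons.mp this).1.symm

lemma flatMap_proj (x y : ℕ) : ∀ w : List ℕ,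
    (w.flatMap fun z => if z = x ∨ z = y then [z] else []) = proj w x y := by
  intro w
  induction w with
  | nil => simp [proj]
  | cons a w ih =>
    rw [List.flatMap_cons, ih]
    by_cases h : a = x ∨ a = y
    · rw [if_pos h]
      have : (a == x || a == y) = true := by
        rcases h with rfl | rfl <;> simp
      simp [proj, List.filter_cons, this]
    · rw [if_neg h]
      push_neg at h
      have : (a == x || a == y) = false := by
        simp [h.1, h.2]
      simp [proj, List.filter_cons, this]

lemma length_two_letter {x y : ℕ} (hxy : x ≠ y) : ∀ {l : List ℕ},
    (∀ z ∈ l, z = x ∨ z = y) → l.count x = 1 → l.count y = 1 → l = [x, y] ∨ l = [y, x] := by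
  intro l hl hx hy
  have hlen : ∀ m : List ℕ, (∀ z ∈ m, z = x ∨ z = y) → m.length = m.count x + m.count y := by
    intro m
    induction m with
    | nil => simp
    | cons a m ih =>
      intro hm
      have hrest := ih (fun z hz => hm z (by simp [hz]))
      rcases hm a (by simp) with rfl | rfl
      · rw [List.count_cons_self, List.count_cons_of_ne hxy]
        simp [hrest]; omega
      · rw [List.count_cons_self, List.count_cons_of_ne (Ne.symm hxy)]
        simp [hrest]; omega
  have h2 : l.length = 2 := by rw [hlen l hl, hx, hy]
  match l, h2 with
  | [a, b], _ =>
    rcases hl a (by simp) with rfl | rfl <;> rcases hl b (by simp) with h | h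
    · rw [List.count_cons_self] at hx
      rw [h] at hx
      simp at hx
    · left; rw [h]
    · right; rw [h]
    · rw [List.count_cons_self] at hy
      rw [h] at hy
      simp at hy

/-- The projection onto two linear letters is preserved. -/
lemma proj_eq {M : Type*} [Monoid M] (hC : PropC M 3) {u v : List ℕ} (hsat : SatM M u v)
    {x y : ℕ} (hxy : x ≠ y) (hx : u.count x = 1) (hy : u.count y = 1)
    (hx' : v.count x = 1) (hy' : v.count y = 1) : proj u x y = proj v x y := by
  classical
  set σ : ℕ → List ℕ := fun z => if z = x ∨ z = y then [z] else [] with hσ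
  have hsat' : SatM M (proj u x y) (proj v x y) := by
    have := satm_flatMap hsat σ
    rwa [hσ, flatMap_proj, flatMap_proj] at this
  have hcu : ∀ (w : List ℕ), (proj w x y).count x = w.count x ∧ (proj w x y).count y = w.count y := by
    intro w
    constructor <;> · rw [proj, List.count_filter]; simp
  have hmu : ∀ (w : List ℕ), ∀ z ∈ proj w x y, z = x ∨ z = y := by
    intro w z hz
    rw [proj, List.mem_filter] at hz
    have := hz.2
    simp at this
    exact this
  have h1 := length_two_letter hxy (hmu u) (by rw [(hcu u).1, hx]) (by rw [(hcu u).2, hy])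
  have h2 := length_two_letter hxy (hmu v) (by rw [(hcu v).1, hx']) (by rw [(hcu v).2, hy'])
  -- rule out the mixed cases using Property C₃
  rcases h1 with h1 | h1 <;> rcases h2 with h2 | h2
  · rw [h1, h2]
  · exfalso
    rw [h1, h2] at hsat'
    have hST : SameType [x, y] [y, x] := by
      apply hC x y hxy
      · simp
      · intro z hz
        simp at hz
        tauto
      · exact height_pair hxy
      · exact hsat'
    have : [y, x] <+ [x, y] := (sameType_pat hST [y, x] (by simp [List.Chain', Ne.symm hxy])).mpr (by simp)
    exact hxy (List.cons_eq_cons.mp (this.eq_of_length rfl)).1.symm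
  · exfalso
    rw [h1, h2] at hsat'
    have hST : SameType [y, x] [x, y] := by
      apply hC y x (Ne.symm hxy)
      · simp
      · intro z hz
        simp at hz
        tauto
      · exact height_pair (Ne.symm hxy)
      · exact hsat'
    have : [x, y] <+ [y, x] := (sameType_pat hST [x, y] (by simp [List.Chain', hxy])).mpr (by simp)
    exact hxy (List.cons_eq_cons.mp (this.eq_of_length rfl)).1
  · rw [h1, h2]

lemma list_eq_of_pairs : ∀ (L1 L2 : List ℕ), (∀ z, L1.count z ≤ 1) → (∀ z, L2.count z ≤ 1) →
    (∀ z, z ∈ L1 ↔ z ∈ L2) →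
    (∀ x y, x ≠ y → L1.filter (fun z => z == x || z == y) = L2.filter (fun z => z == x || z == y)) →
    L1 = L2 := by
  intro L1
  induction L1 with
  | nil =>
    intro L2 _ _ hm _
    cases L2 with
    | nil => rfl
    | cons b l2 => exact absurd ((hm b).mpr (by simp)) (by simp)
  | cons a l1 ih =>
    intro L2 hc1 hc2 hm hf
    cases L2 with
    | nil => exact absurd ((hm a).mp (by simp)) (by simp)
    | cons b l2 =>
      have hab : b = a := by
        by_contra hne
        have h := hf a b (fun he => hne he.symm)
        rw [List.filter_cons_of_pos (by simp), List.filter_cons_of_pos (by simp)] at h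
        exact hne (List.cons_eq_cons.mp h).1.symm
      subst hab
      have hal1 : b ∉ l1 := by
        intro hmem
        have := hc1 b
        rw [List.count_cons_self] at this
        have := List.count_pos_iff.mpr hmem
        omega
      have hal2 : b ∉ l2 := by
        intro hmem
        have := hc2 b
        rw [List.count_cons_self] at this
        have := List.count_pos_iff.mpr hmem
        omega
      congr 1
      apply ih l2
      · intro z
        have := hc1 z
        rw [List.count_cons] at this
        omega
      · intro z
        have := hc2 z
        rw [List.count_cons] at this
        omega
      · intro z
        by_cases hz : z = b
        · subst hz; simp [hal1, hal2]
        · have := hm z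
          simpa [hz] using this
      · intro x y hxy
        have h := hf x y hxy
        rw [List.filter_cons, List.filter_cons] at h
        split at h
        · exact (List.cons_eq_cons.mp h).2
        · exact h

lemma assemble_filter (p : ℕ → Bool) : ∀ (A : List (List ℕ)) (T : List ℕ),
    A.length = T.length + 1 → (∀ a ∈ A, ∀ z ∈ a, p z = false) → (∀ t ∈ T, p t = true) →
    (assemble A T).filter p = T := by
  intro A T
  induction T generalizing A with
  | nil =>
    intro hA ha ht
    cases A with
    | nil => simp at hA
    | cons a A' =>
      simp only [assemble]
      rw [List.filter_eq_nil_iff.mpr]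
      intro z hz
      simp [ha a (by simp) z hz]
  | cons t T' ih =>
    intro hA ha ht
    cases A with
    | nil => simp at hA
    | cons a A' =>
      simp only [assemble, List.filter_append, List.filter_cons]
      rw [List.filter_eq_nil_iff.mpr (fun z hz => by simp [ha a (by simp) z hz])]
      simp only [ht t (by simp), List.nil_append]
      rw [ih A' (by simpa using hA) (fun b hb z hz => ha b (by simp [hb]) z hz)
        (fun s hs => ht s (by simp [hs]))]
      simp

def splitP (p : ℕ → Bool) : List ℕ → List (List ℕ)
  | [] => [[]]
  | a :: l =>
      let r := splitP p l
      if p a then [] :: r else (a :: r.headI) :: r.tail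

lemma splitP_ne_nil (p : ℕ → Bool) : ∀ l, splitP p l ≠ [] := by
  intro l
  cases l with
  | nil => simp [splitP]
  | cons a l =>
    simp only [splitP]
    split <;> simp

lemma splitP_assemble (p : ℕ → Bool) : ∀ l : List ℕ, assemble (splitP p l) (l.filter p) = l := by
  intro l
  induction l with
  | nil => simp [splitP, assemble]
  | cons a l ih =>
    by_cases h : p a
    · simp only [splitP, if_pos h, List.filter_cons, h, ite_true]
      simp only [assemble, List.nil_append]
      rw [ih]
    · obtain ⟨b, B, hr⟩ : ∃ b B, splitP p l = b :: B := by
        rcases hl : splitP p l with _ | ⟨b, B⟩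
        · exact absurd hl (splitP_ne_nil p l)
        · exact ⟨b, B, rfl⟩
      simp only [splitP, if_neg h, List.filter_cons, h, Bool.false_eq_true, ite_false]
      rw [hr] at ih ⊢
      simp only [List.headI, List.tail]
      cases hf : List.filter p l with
      | nil =>
        rw [hf] at ih
        simp only [assemble] at ih ⊢
        simp [ih]
      | cons t fw =>
        rw [hf] at ih
        simp only [assemble] at ih ⊢
        simp [ih]

lemma splitP_length (p : ℕ → Bool) : ∀ l : List ℕ, (splitP p l).length = (l.filter p).length + 1 := by
  intro l
  induction l with
  | nil => simp [splitP]
  | cons a l ih =>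
    obtain ⟨b, B, hr⟩ : ∃ b B, splitP p l = b :: B := by
      rcases hl : splitP p l with _ | ⟨b, B⟩
      · exact absurd hl (splitP_ne_nil p l)
      · exact ⟨b, B, rfl⟩
    by_cases h : p a
    · simp only [splitP, if_pos h, List.filter_cons, h]
      simpa using ih
    · simp only [splitP, if_neg h, List.filter_cons, h]
      rw [hr] at ih ⊢
      simpa using ih

lemma splitP_false (p : ℕ → Bool) : ∀ l : List ℕ, ∀ b ∈ splitP p l, ∀ z ∈ b, p z = false := by
  intro l
  induction l with
  | nil => intro b hb z hz; simp [splitP] at hb; subst hb; cases hz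
  | cons a l ih =>
    intro b hb z hz
    obtain ⟨c, B, hr⟩ : ∃ c B, splitP p l = c :: B := by
      rcases hl : splitP p l with _ | ⟨c, B⟩
      · exact absurd hl (splitP_ne_nil p l)
      · exact ⟨c, B, rfl⟩
    by_cases h : p a
    · simp only [splitP, if_pos h] at hb
      rcases List.mem_cons.mp hb with rfl | hb
      · cases hz
      · exact ih b hb z hz
    · simp only [splitP, if_neg h, hr] at hb
      simp only [List.headI, List.tail] at hb
      rcases List.mem_cons.mp hb with rfl | hb
      · rcases List.mem_cons.mp hz with rfl | hz
        · simpa using h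
        · exact ih c (by rw [hr]; simp) z hz
      · exact ih b (by rw [hr]; simp [hb]) z hz

lemma assemble_split : ∀ (q : ℕ) (A : List (List ℕ)) (T : List ℕ) (hq : q < T.length),
    A.length = T.length + 1 →
    assemble A T = assemble (A.take (q+1)) (T.take q) ++
      T[q] :: assemble (A.drop (q+1)) (T.drop (q+1)) := by
  intro q
  induction q with
  | zero =>
    intro A T hq hA
    cases T with
    | nil => simp at hq
    | cons t T' =>
      cases A with
      | nil => simp at hA
      | cons a A' => simp [assemble]
  | succ q ih =>
    intro A T hq hA
    cases T with
    | nil => simp at hq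
    | cons t T' =>
      cases A with
      | nil => simp at hA
      | cons a A' =>
        have hq' : q < T'.length := by simpa using hq
        have hA' : A'.length = T'.length + 1 := by simpa using hA
        simp only [assemble, List.take_succ_cons, List.drop_succ_cons]
        rw [ih A' T' hq' hA']
        simp [assemble]

lemma nopat3 {x t : ℕ} (hxt : x ≠ t) (a g : ℕ) :
    ¬ ([t, x, t] <+ (List.replicate a x ++ t :: t :: List.replicate g x)) := by
  intro h
  rcases List.sublist_append_iff.mp h with ⟨p1, p2, heq, h1, h2⟩
  have hall : ∀ z ∈ p1, z = x := fun z hz => List.eq_of_mem_replicate (h1.subset hz)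
  cases p1 with
  | cons z p1' =>
    have hz : z = t := (List.cons_eq_cons.mp heq.symm).1
    exact hxt (hz ▸ hall z (by simp)).symm
  | nil =>
    simp only [List.nil_append] at heq
    subst heq
    have htx : t ∉ List.replicate g x := fun hm => hxt (List.eq_of_mem_replicate hm).symm
    rcases List.sublist_cons_iff.mp h2 with h3 | ⟨r, hr, h3⟩
    · rcases List.sublist_cons_iff.mp h3 with h4 | ⟨r, hr, h4⟩
      · exact htx (h4.subset (by simp))
      · obtain ⟨-, hr2⟩ := List.cons_eq_cons.mp hr
        rw [← hr2] at h4
        exact htx (h4.subset (by simp))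
    · obtain ⟨-, hr2⟩ := List.cons_eq_cons.mp hr
      rw [← hr2] at h3
      rcases List.sublist_cons_iff.mp h3 with h4 | ⟨r', hr', h4⟩
      · have : t ∈ List.replicate g x := h4.subset (by simp)
        exact hxt (List.eq_of_mem_replicate this).symm
      · exact hxt (List.cons_eq_cons.mp hr').1

lemma nopat_right {x t : ℕ} (hxt : x ≠ t) (a : ℕ) :
    ¬ ([x, t] <+ (t :: List.replicate a x)) := by
  intro h
  rcases List.sublist_cons_iff.mp h with h1 | ⟨r, hr, h1⟩
  · have : t ∈ List.replicate a x := h1.subset (by simp)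
    exact hxt (List.eq_of_mem_replicate this).symm
  · exact hxt (List.cons_eq_cons.mp hr).1

lemma nopat_left {x t : ℕ} (hxt : x ≠ t) (a : ℕ) :
    ¬ ([t, x] <+ (List.replicate a x ++ [t])) := by
  intro h
  rcases List.sublist_append_iff.mp h with ⟨p1, p2, heq, h1, h2⟩
  have hall : ∀ z ∈ p1, z = x := fun z hz => List.eq_of_mem_replicate (h1.subset hz)
  cases p1 with
  | cons z p1' =>
    have hz : z = t := (List.cons_eq_cons.mp heq.symm).1
    exact hxt (hz ▸ hall z (by simp)).symm
  | nil =>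
    simp only [List.nil_append] at heq
    subst heq
    have := h2.length_le
    simp at this

lemma letters_rep1 {x t : ℕ} (a b : ℕ) :
    ∀ z ∈ (List.replicate a x ++ t :: List.replicate b x), z = x ∨ z = t := by
  intro z hz
  simp only [List.mem_append, List.mem_cons, List.mem_replicate] at hz
  tauto

lemma letters_rep2 {x t : ℕ} (a b g : ℕ) :
    ∀ z ∈ (List.replicate a x ++ t :: (List.replicate b x ++ t :: List.replicate g x)),
      z = x ∨ z = t := by
  intro z hz
  simp only [List.mem_append, List.mem_cons, List.mem_replicate] at hz
  tauto

lemma sub_singleton_rep {x : ℕ} {c : ℕ} (h : 0 < c) : [x] <+ List.replicate c x :=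
  List.singleton_sublist.mpr (List.mem_replicate.mpr ⟨by omega, rfl⟩)

/-- The key block-membership transfer lemma. -/
lemma block_mem {M : Type*} [Monoid M] (hC : PropC M 3) {u v : List ℕ} (hsat : SatM M u v)
    {A B : List (List ℕ)} {T : List ℕ}
    (hu : u = assemble A T) (hv : v = assemble B T)
    (hA : A.length = T.length + 1) (hB : B.length = T.length + 1)
    (hTu : ∀ t ∈ T, u.count t = 1) (hTv : ∀ t ∈ T, v.count t = 1)
    (hAT : ∀ a ∈ A, ∀ z ∈ a, z ∉ T) (hBT : ∀ b ∈ B, ∀ z ∈ b, z ∉ T)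
    {q : ℕ} (hq : q < A.length) {x : ℕ} (hqB : q < B.length)
    (hx : x ∈ A[q]) : x ∈ B[q] := by
  classical
  have hxT : x ∉ T := hAT A[q] (List.getElem_mem hq) x hx
  rcases T with _ | ⟨t0, T0⟩
  · -- T = []
    have hq0 : q = 0 := by simp at hA; omega
    subst hq0
    rcases A with _ | ⟨a, A'⟩
    · simp at hA
    rcases B with _ | ⟨b, B'⟩
    · simp at hB
    have hu' : u = a := by rw [hu]; rfl
    have hv' : v = b := by rw [hv]; rfl
    have : x ∈ u := by rw [hu']; simpa using hx
    have := mem_preserved hC hsat x this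
    rw [hv'] at this
    simpa using this
  · set T := t0 :: T0 with hT
    have hqT : q ≤ T.length := by rw [hT] at hA ⊢; omega
    rcases Nat.eq_zero_or_pos q with rfl | hq1
    · -- q = 0
      rcases A with _ | ⟨a, A'⟩
      · simp at hA
      rcases B with _ | ⟨b, B'⟩
      · simp at hB
      simp only [List.getElem_cons_zero] at hx ⊢
      have hue : u = a ++ t0 :: assemble A' T0 := by rw [hu]; rfl
      have hve : v = b ++ t0 :: assemble B' T0 := by rw [hv]; rfl
      set Ru := assemble A' T0
      set Rv := assemble B' T0
      have ht0T : t0 ∈ T := by rw [hT]; simp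
      have hxt : x ≠ t0 := fun he => hxT (he ▸ ht0T)
      have hta : t0 ∉ a := fun hm => hAT a (by simp) t0 hm ht0T
      have htb : t0 ∉ b := fun hm => hBT b (by simp) t0 hm ht0T
      have htRu : t0 ∉ Ru := by
        have h1 := hTu t0 ht0T
        rw [hue, List.count_append, List.count_cons_self, List.count_eq_zero.mpr hta] at h1
        exact List.count_eq_zero.mp (by omega)
      have htRv : t0 ∉ Rv := by
        have h1 := hTv t0 ht0T
        rw [hve, List.count_append, List.count_cons_self, List.count_eq_zero.mpr htb] at h1
        exact List.count_eq_zero.mp (by omega)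
      set σ : ℕ → List ℕ := fun z => if z = x then [x] else if z = t0 then [t0] else [] with hσ
      have hσx : σ x = [x] := by simp [hσ]
      have hσt : σ t0 = [t0] := by simp [hσ, Ne.symm hxt]
      have heval : ∀ w : List ℕ, t0 ∉ w →
          w.flatMap σ = List.replicate (w.count x) x := by
        intro w hw
        refine flatMap_rep hσx w (fun z hz hzx => ?_)
        have hzt : z ≠ t0 := fun he => hw (he ▸ hz)
        simp [hσ, hzx, hzt]
      have hufm : u.flatMap σ
          = List.replicate (a.count x) x ++ t0 :: List.replicate (Ru.count x) x := by
        rw [hue, List.flatMap_append, List.flatMap_cons, hσt, heval a hta, heval Ru htRu]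
        rfl
      have hvfm : v.flatMap σ
          = List.replicate (b.count x) x ++ t0 :: List.replicate (Rv.count x) x := by
        rw [hve, List.flatMap_append, List.flatMap_cons, hσt, heval b htb, heval Rv htRv]
        rfl
      have hsat' := satm_flatMap hsat σ
      rw [hufm, hvfm] at hsat'
      have hST := hC x t0 hxt _ _ (by simp) (letters_rep1 _ _) (height_H1 hxt _ _) hsat'
      have hcnt : 0 < a.count x := List.count_pos_iff.mpr hx
      have hpatu : [x, t0] <+ List.replicate (a.count x) x ++ t0 :: List.replicate (Ru.count x) x := by
        have h1 : [x] <+ List.replicate (a.count x) x := sub_singleton_rep hcnt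
        have h2 : [t0] <+ t0 :: List.replicate (Ru.count x) x := (List.nil_sublist _).cons₂ t0
        exact h1.append h2
      have hpatv := (sameType_pat hST [x, t0] (by simp [List.Chain', hxt])).mp hpatu
      by_contra hxb
      rw [List.count_eq_zero.mpr hxb] at hpatv
      exact nopat_right hxt _ hpatv
    · -- 1 ≤ q
      obtain ⟨j, rfl⟩ : ∃ j, q = j + 1 := ⟨q - 1, by omega⟩
      have hjT : j < T.length := by omega
      have hsplitu := assemble_split j A T hjT hA
      have hsplitv := assemble_split j B T hjT hB
      rw [← hu] at hsplitu
      rw [← hv] at hsplitv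
      set t1 := T[j] with ht1
      have ht1T : t1 ∈ T := List.getElem_mem hjT
      have hxt1 : x ≠ t1 := fun he => hxT (he ▸ ht1T)
      set Pu := assemble (A.take (j+1)) (T.take j) with hPu
      set Pv := assemble (B.take (j+1)) (T.take j) with hPv
      have hdropA : A.drop (j+1) = A[j+1] :: A.drop (j+2) := List.drop_eq_getElem_cons hq
      have hdropB : B.drop (j+1) = B[j+1] :: B.drop (j+2) := List.drop_eq_getElem_cons hqB
      rcases Nat.lt_or_ge (j+1) T.length with hlt | hge
      · -- interior case
        set t2 := T[j+1] with ht2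
        have ht2T : t2 ∈ T := List.getElem_mem hlt
        have hxt2 : x ≠ t2 := fun he => hxT (he ▸ ht2T)
        have hdropT : T.drop (j+1) = t2 :: T.drop (j+2) := List.drop_eq_getElem_cons hlt
        set Ru := assemble (A.drop (j+2)) (T.drop (j+2)) with hRu
        set Rv := assemble (B.drop (j+2)) (T.drop (j+2)) with hRv
        have hue : u = Pu ++ t1 :: (A[j+1] ++ t2 :: Ru) := by
          rw [hsplitu, hdropA, hdropT]; rfl
        have hve : v = Pv ++ t1 :: (B[j+1] ++ t2 :: Rv) := by
          rw [hsplitv, hdropB, hdropT]; rfl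
        -- t1, t2 do not occur in the pieces
        have ht12 : t1 ≠ t2 := by
          intro he
          have h1 := hTu t1 ht1T
          rw [hue, List.count_append, List.count_cons_self, List.count_append, ← he,
            List.count_cons_self] at h1
          omega
        have hcu1 := hTu t1 ht1T
        have hcu2 := hTu t2 ht2T
        have hcv1 := hTv t1 ht1T
        have hcv2 := hTv t2 ht2T
        rw [hue, List.count_append, List.count_cons_self, List.count_append,
          List.count_cons_of_ne (Ne.symm ht12)] at hcu1
        rw [hue, List.count_append, List.count_cons_of_ne ht12, List.count_append,
          List.count_cons_self] at hcu2
        rw [hve, List.count_append, List.count_cons_self, List.count_append,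
          List.count_cons_of_ne (Ne.symm ht12)] at hcv1
        rw [hve, List.count_append, List.count_cons_of_ne ht12, List.count_append,
          List.count_cons_self] at hcv2
        have hσ' : ∀ (w : List ℕ), t1 ∉ w → t2 ∉ w →
            w.flatMap (fun z => if z = x then [x] else if z = t1 ∨ z = t2 then [t1] else [])
              = List.replicate (w.count x) x := by
          intro w h1 h2
          refine flatMap_rep (by simp) w (fun z hz hzx => ?_)
          have hz1 : z ≠ t1 := fun he => h1 (he ▸ hz)
          have hz2 : z ≠ t2 := fun he => h2 (he ▸ hz)
          simp [hzx, hz1, hz2]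
        set σ : ℕ → List ℕ :=
          fun z => if z = x then [x] else if z = t1 ∨ z = t2 then [t1] else [] with hσ
        have hσt1 : σ t1 = [t1] := by simp [hσ, Ne.symm hxt1]
        have hσt2 : σ t2 = [t1] := by simp [hσ, Ne.symm hxt2]
        have hufm : u.flatMap σ = List.replicate (Pu.count x) x
            ++ t1 :: (List.replicate (A[j+1].count x) x ++ t1 :: List.replicate (Ru.count x) x) := by
          rw [hue, List.flatMap_append, List.flatMap_cons, hσt1, List.flatMap_append,
            List.flatMap_cons, hσt2,
            hσ' Pu (List.count_eq_zero.mp (by omega)) (List.count_eq_zero.mp (by omega)),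
            hσ' (A[j+1]) (List.count_eq_zero.mp (by omega)) (List.count_eq_zero.mp (by omega)),
            hσ' Ru (List.count_eq_zero.mp (by omega)) (List.count_eq_zero.mp (by omega))]
          rfl
        have hvfm : v.flatMap σ = List.replicate (Pv.count x) x
            ++ t1 :: (List.replicate (B[j+1].count x) x ++ t1 :: List.replicate (Rv.count x) x) := by
          rw [hve, List.flatMap_append, List.flatMap_cons, hσt1, List.flatMap_append,
            List.flatMap_cons, hσt2,
            hσ' Pv (List.count_eq_zero.mp (by omega)) (List.count_eq_zero.mp (by omega)),
            hσ' (B[j+1]) (List.count_eq_zero.mp (by omega)) (List.count_eq_zero.mp (by omega)),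
            hσ' Rv (List.count_eq_zero.mp (by omega)) (List.count_eq_zero.mp (by omega))]
          rfl
        by_contra hxb
        have hsat' := satm_flatMap (satm_symm hsat) σ
        rw [hufm, hvfm] at hsat'
        rw [List.count_eq_zero.mpr hxb] at hsat'
        have hST := hC x t1 hxt1 _ _ (by simp) (by simpa using letters_rep2 (Pv.count x) 0 (Rv.count x))
          (by simpa using height_H2 hxt1 (Pv.count x) (Rv.count x)) hsat'
        have hcnt : 0 < A[j+1].count x := List.count_pos_iff.mpr hx
        have hpatu : [t1, x, t1] <+ List.replicate (Pu.count x) x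
            ++ t1 :: (List.replicate (A[j+1].count x) x ++ t1 :: List.replicate (Ru.count x) x) := by
          have core : [x, t1] <+ List.replicate (A[j+1].count x) x
              ++ t1 :: List.replicate (Ru.count x) x :=
            (sub_singleton_rep hcnt).append ((List.nil_sublist _).cons₂ t1)
          have core2 : [t1, x, t1] <+ t1 ::
              (List.replicate (A[j+1].count x) x ++ t1 :: List.replicate (Ru.count x) x) :=
            core.cons₂ t1
          exact core2.trans (List.sublist_append_right _ _)
        have hpatv := (sameType_pat hST [t1, x, t1]
          (by simp [List.Chain', hxt1, Ne.symm hxt1])).mpr hpatu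
        exact nopat3 hxt1 _ _ (by simpa using hpatv)
      · -- last block: j + 1 = T.length
        have hTlen : j + 1 = T.length := by omega
        have hdropT : T.drop (j+1) = [] := by
          rw [List.drop_eq_nil_iff]
          omega
        have hdropA2 : A.drop (j+2) = [] := by
          rw [List.drop_eq_nil_iff]
          omega
        have hdropB2 : B.drop (j+2) = [] := by
          rw [List.drop_eq_nil_iff]
          omega
        have hue : u = Pu ++ t1 :: A[j+1] := by
          rw [hsplitu, hdropA, hdropT, hdropA2]; rfl
        have hve : v = Pv ++ t1 :: B[j+1] := by
          rw [hsplitv, hdropB, hdropT, hdropB2]; rfl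
        have hcu1 := hTu t1 ht1T
        have hcv1 := hTv t1 ht1T
        rw [hue] at hcu1
        rw [hve] at hcv1
        simp only [List.count_append, List.count_cons_self] at hcu1 hcv1
        set σ : ℕ → List ℕ := fun z => if z = x then [x] else if z = t1 then [t1] else [] with hσ
        have hσx : σ x = [x] := by simp [hσ]
        have hσt : σ t1 = [t1] := by simp [hσ, Ne.symm hxt1]
        have heval : ∀ w : List ℕ, t1 ∉ w →
            w.flatMap σ = List.replicate (w.count x) x := by
          intro w hw
          refine flatMap_rep hσx w (fun z hz hzx => ?_)
          have hzt : z ≠ t1 := fun he => hw (he ▸ hz)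
          simp [hσ, hzx, hzt]
        have hufm : u.flatMap σ
            = List.replicate (Pu.count x) x ++ t1 :: List.replicate (A[j+1].count x) x := by
          rw [hue, List.flatMap_append, List.flatMap_cons, hσt,
            heval Pu (List.count_eq_zero.mp (by omega)),
            heval (A[j+1]) (List.count_eq_zero.mp (by omega))]
          rfl
        have hvfm : v.flatMap σ
            = List.replicate (Pv.count x) x ++ t1 :: List.replicate (B[j+1].count x) x := by
          rw [hve, List.flatMap_append, List.flatMap_cons, hσt,
            heval Pv (List.count_eq_zero.mp (by omega)),
            heval (B[j+1]) (List.count_eq_zero.mp (by omega))]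
          rfl
        have hsat' := satm_flatMap hsat σ
        rw [hufm, hvfm] at hsat'
        have hST := hC x t1 hxt1 _ _ (by simp) (letters_rep1 _ _) (height_H1 hxt1 _ _) hsat'
        have hcnt : 0 < A[j+1].count x := List.count_pos_iff.mpr hx
        have hpatu : [t1, x] <+ List.replicate (Pu.count x) x
            ++ t1 :: List.replicate (A[j+1].count x) x := by
          have core : [t1, x] <+ t1 :: List.replicate (A[j+1].count x) x :=
            (sub_singleton_rep hcnt).cons₂ t1
          exact core.trans (List.sublist_append_right _ _)
        have hpatv := (sameType_pat hST [t1, x] (by simp [List.Chain', Ne.symm hxt1])).mp hpatu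
        by_contra hxb
        rw [List.count_eq_zero.mpr hxb] at hpatv
        exact nopat_left hxt1 _ (by simpa using hpatv)

end Aux

/-- Structure lemma: if M satisfies (C_3) and M ⊨ u ≈ v, where
u = a₀t₁a₁t₂⋯t_m a_m with t₁,…,t_m exactly the linear variables of u and the a_q the
blocks, then u and v have the same linear and non-linear variables, the linear
variables occur in the same order, and v = b₀t₁b₁t₂⋯t_m b_m with
con(a_q) = con(b_q) for all q. -/
theorem stmt9 (M : Type*) [Monoid M] (hC : PropC M 3)
    (u v : List ℕ) (hsat : SatM M u v)
    (A : List (List ℕ)) (T : List ℕ)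
    (hlen : A.length = T.length + 1)
    (hu : u = assemble A T)
    (hTlin : ∀ t ∈ T, u.count t = 1)
    (hTall : ∀ x, u.count x = 1 → x ∈ T)
    (hAnon : ∀ a ∈ A, ∀ x ∈ a, 2 ≤ u.count x) :
    (∀ x, u.count x = 1 ↔ v.count x = 1) ∧
    (∀ x, 2 ≤ u.count x ↔ 2 ≤ v.count x) ∧
    (u.filter (fun x => u.count x == 1) = v.filter (fun x => v.count x == 1)) ∧
    ∃ B : List (List ℕ), v = assemble B T ∧
      List.Forall₂ (fun a b => a.toFinset = b.toFinset) A B := by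
  classical
  have part1 : ∀ x, u.count x = 1 ↔ v.count x = 1 :=
    fun x => ⟨fun h => count_one_of hC hsat h, fun h => count_one_of hC (satm_symm hsat) h⟩
  have hmem : ∀ x, x ∈ u ↔ x ∈ v :=
    fun x => ⟨mem_preserved hC hsat x, mem_preserved hC (satm_symm hsat) x⟩
  have part2 : ∀ x, 2 ≤ u.count x ↔ 2 ≤ v.count x := by
    intro x
    constructor
    · intro h
      have h1 : x ∈ v := (hmem x).mp (List.count_pos_iff.mp (by omega))
      have h2 : v.count x ≠ 1 := fun hc => by have := (part1 x).mpr hc; omega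
      have h3 := List.count_pos_iff.mpr h1
      omega
    · intro h
      have h1 : x ∈ u := (hmem x).mpr (List.count_pos_iff.mp (by omega))
      have h2 : u.count x ≠ 1 := fun hc => by have := (part1 x).mp hc; omega
      have h3 := List.count_pos_iff.mpr h1
      omega
  have part3 : u.filter (fun z => u.count z == 1) = v.filter (fun z => v.count z == 1) := by
    apply list_eq_of_pairs
    · intro z
      by_cases h : u.count z = 1
      · have hsub : List.Sublist (u.filter (fun z => u.count z == 1)) u := List.filter_sublist
        have := hsub.count_le z
        omega
      · have : z ∉ u.filter (fun z => u.count z == 1) := by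
          intro hm
          rw [List.mem_filter, beq_iff_eq] at hm
          exact h hm.2
        rw [List.count_eq_zero.mpr this]
        omega
    · intro z
      by_cases h : v.count z = 1
      · have hsub : List.Sublist (v.filter (fun z => v.count z == 1)) v := List.filter_sublist
        have := hsub.count_le z
        omega
      · have : z ∉ v.filter (fun z => v.count z == 1) := by
          intro hm
          rw [List.mem_filter, beq_iff_eq] at hm
          exact h hm.2
        rw [List.count_eq_zero.mpr this]
        omega
    · intro z
      simp only [List.mem_filter, beq_iff_eq]
      constructor
      · rintro ⟨-, h⟩
        have h' := (part1 z).mp h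
        exact ⟨List.count_pos_iff.mp (by omega), h'⟩
      · rintro ⟨-, h⟩
        have h' := (part1 z).mpr h
        exact ⟨List.count_pos_iff.mp (by omega), h'⟩
    · intro x y hxy
      rw [List.filter_filter, List.filter_filter]
      by_cases hx1 : u.count x = 1 <;> by_cases hy1 : u.count y = 1
      · -- both linear
        have hx1' := (part1 x).mp hx1
        have hy1' := (part1 y).mp hy1
        have e1 : (fun a => (a == x || a == y) && (u.count a == 1)) = (fun a => a == x || a == y) := by
          funext a
          by_cases hax : a = x
          · subst hax; simp [hx1]
          · by_cases hay : a = y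
            · subst hay; simp [hy1]
            · rw [beq_eq_false_iff_ne.mpr hax, beq_eq_false_iff_ne.mpr hay]
              simp
        have e2 : (fun a => (a == x || a == y) && (v.count a == 1)) = (fun a => a == x || a == y) := by
          funext a
          by_cases hax : a = x
          · subst hax; simp [hx1']
          · by_cases hay : a = y
            · subst hay; simp [hy1']
            · rw [beq_eq_false_iff_ne.mpr hax, beq_eq_false_iff_ne.mpr hay]
              simp
        rw [e1, e2]
        exact proj_eq hC hsat hxy hx1 hy1 hx1' hy1'
      · -- x linear, y not
        have hx1' := (part1 x).mp hx1
        have hy1' : ¬ v.count y = 1 := fun hc => hy1 ((part1 y).mpr hc)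
        have e1 : (fun a => (a == x || a == y) && (u.count a == 1)) = (fun a => a == x) := by
          funext a
          by_cases hax : a = x
          · subst hax; simp [hx1]
          · by_cases hay : a = y
            · subst hay
              rw [beq_eq_false_iff_ne.mpr hy1, beq_eq_false_iff_ne.mpr (Ne.symm hxy)]
              simp
            · rw [beq_eq_false_iff_ne.mpr hax, beq_eq_false_iff_ne.mpr hay]
              simp
        have e2 : (fun a => (a == x || a == y) && (v.count a == 1)) = (fun a => a == x) := by
          funext a
          by_cases hax : a = x
          · subst hax; simp [hx1']
          · by_cases hay : a = y
            · subst hay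
              rw [beq_eq_false_iff_ne.mpr hy1', beq_eq_false_iff_ne.mpr (Ne.symm hxy)]
              simp
            · rw [beq_eq_false_iff_ne.mpr hax, beq_eq_false_iff_ne.mpr hay]
              simp
        rw [e1, e2, List.filter_beq, List.filter_beq, hx1, hx1']
      · -- y linear, x not
        have hy1' := (part1 y).mp hy1
        have hx1' : ¬ v.count x = 1 := fun hc => hx1 ((part1 x).mpr hc)
        have e1 : (fun a => (a == x || a == y) && (u.count a == 1)) = (fun a => a == y) := by
          funext a
          by_cases hax : a = x
          · subst hax
            rw [beq_eq_false_iff_ne.mpr hx1, beq_eq_false_iff_ne.mpr hxy]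
            simp
          · by_cases hay : a = y
            · subst hay; simp [hy1]
            · rw [beq_eq_false_iff_ne.mpr hax, beq_eq_false_iff_ne.mpr hay]
              simp
        have e2 : (fun a => (a == x || a == y) && (v.count a == 1)) = (fun a => a == y) := by
          funext a
          by_cases hax : a = x
          · subst hax
            rw [beq_eq_false_iff_ne.mpr hx1', beq_eq_false_iff_ne.mpr hxy]
            simp
          · by_cases hay : a = y
            · subst hay; simp [hy1']
            · rw [beq_eq_false_iff_ne.mpr hax, beq_eq_false_iff_ne.mpr hay]
              simp
        rw [e1, e2, List.filter_beq, List.filter_beq, hy1, hy1']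
      · -- neither linear
        have hx1' : ¬ v.count x = 1 := fun hc => hx1 ((part1 x).mpr hc)
        have hy1' : ¬ v.count y = 1 := fun hc => hy1 ((part1 y).mpr hc)
        have e1 : (fun a => (a == x || a == y) && (u.count a == 1)) = (fun _ => false) := by
          funext a
          by_cases hax : a = x
          · subst hax
            rw [beq_eq_false_iff_ne.mpr hx1]
            simp
          · by_cases hay : a = y
            · subst hay
              rw [beq_eq_false_iff_ne.mpr hy1]
              simp
            · rw [beq_eq_false_iff_ne.mpr hax, beq_eq_false_iff_ne.mpr hay]
              simp
        have e2 : (fun a => (a == x || a == y) && (v.count a == 1)) = (fun _ => false) := by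
          funext a
          by_cases hax : a = x
          · subst hax
            rw [beq_eq_false_iff_ne.mpr hx1']
            simp
          · by_cases hay : a = y
            · subst hay
              rw [beq_eq_false_iff_ne.mpr hy1']
              simp
            · rw [beq_eq_false_iff_ne.mpr hax, beq_eq_false_iff_ne.mpr hay]
              simp
        rw [e1, e2, List.filter_false, List.filter_false]
  have hfu : u.filter (fun z => u.count z == 1) = T := by
    have h := assemble_filter (fun z => u.count z == 1) A T hlen
      (by intro a ha z hz; have := hAnon a ha z hz; simp; omega)
      (by intro t ht; simp [hTlin t ht])
    rw [← hu] at h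
    exact h
  have hfv : v.filter (fun z => v.count z == 1) = T := by rw [← part3]; exact hfu
  have hTv : ∀ t ∈ T, v.count t = 1 := fun t ht => (part1 t).mp (hTlin t ht)
  have hAT : ∀ a ∈ A, ∀ z ∈ a, z ∉ T := by
    intro a ha z hz htz
    have h1 := hAnon a ha z hz
    have h2 := hTlin z htz
    omega
  set B := splitP (fun z => v.count z == 1) v with hBdef
  have hvB : v = assemble B T := by
    have h := splitP_assemble (fun z => v.count z == 1) v
    rw [hfv] at h
    exact h.symm
  have hBlen : B.length = T.length + 1 := by
    rw [hBdef, splitP_length, hfv]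
  have hBT : ∀ b ∈ B, ∀ z ∈ b, z ∉ T := by
    intro b hb z hz htz
    have h1 := splitP_false (fun z => v.count z == 1) v b hb z hz
    have h2 := hTv z htz
    simp [h2] at h1
  refine ⟨part1, part2, part3, B, hvB, ?_⟩
  rw [List.forall₂_iff_get]
  refine ⟨by omega, ?_⟩
  intro i h1 h2
  simp only [List.get_eq_getElem]
  ext z
  simp only [List.mem_toFinset]
  constructor
  · intro hz
    exact block_mem hC hsat hu hvB hlen hBlen hTlin hTv hAT hBT h1 h2 hz
  · intro hz
    exact block_mem hC (satm_symm hsat) hvB hu hBlen hlen hTv hTlin hBT hAT h2 h1 hz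
end
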